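/- A weak higher dimensional transition system X satisfies the Unique intermediate state axiom if and only if it is orthogonal to all the inclusions C_n[a_1,…,a_n]^ext ⊆ C_n[a_1,…,a_n] (n ≥ 0, a_1,…,a_n ∈ Σ); that is, if and only if for every n ≥ 0 and a_1,…,a_n ∈ Σ, the restriction map from the set of morphisms C_n[a_1,…,a_n] → X to the set of morphisms C_n[a_1,…,a_n]^ext → X is a bijection. -/

import Mathlib

variable {S L Λ : Type*}

/-- The Multiset axiom: the set of transitions is closed under permutations of
the list of actions. -/
def MultisetAxiom (T : S → List L → S → Prop) : Prop :=
  ∀ (α β : S) (l l' : List L), l.Perm l' → T α l β → T α l' β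

/-- The Coherence axiom. -/
def CoherenceAxiom (T : S → List L → S → Prop) : Prop :=
  ∀ (α β ν₁ ν₂ : S) (l₁ l₂ l₃ : List L), l₁ ≠ [] → l₂ ≠ [] → l₃ ≠ [] →
    T α (l₁ ++ l₂ ++ l₃) β → T α l₁ ν₁ → T ν₁ (l₂ ++ l₃) β →
    T α (l₁ ++ l₂) ν₂ → T ν₂ l₃ β → T ν₁ l₂ ν₂

/-- The first Cattani-Sassone axiom. -/
def CSA1 (μ : L → Λ) (T : S → List L → S → Prop) : Prop :=
  ∀ (α β : S) (u u' : L), T α [u] β → T α [u'] β → μ u = μ u' → u = u'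

/-- The Unique intermediate state axiom. -/
def UniqueIntermediate (T : S → List L → S → Prop) : Prop :=
  ∀ (α β : S) (l₁ l₂ : List L), l₁ ≠ [] → l₂ ≠ [] → T α (l₁ ++ l₂) β →
    ∃! ν, T α l₁ ν ∧ T ν l₂ β
universe u u1 u2 u3 u4 u5 u6

/-- A transition structure over the set of labels `Λ`: a set of states `S`, a
set of actions `L`, a labelling map `μ : L → Λ`, and a set of transitions
`(α, u_1, …, u_n, β)` encoded as `T α [u_1, …, u_n] β`. Weak higher dimensional
transition systems are the transition structures whose transitions have
nonempty lists of actions and satisfying the Multiset and Coherence axioms. -/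
structure TransSys (Λ : Type u) where
  /-- the states -/
  S : Type u1
  /-- the actions -/
  L : Type u2
  /-- the labelling map -/
  μ : L → Λ
  /-- the transitions -/
  T : S → List L → S → Prop

/-- A morphism of (weak higher dimensional) transition systems: a pair of set
maps on states and actions commuting with the labelling maps and taking
transitions to transitions. -/
structure TransSys.Hom {Λ : Type u} (X : TransSys.{u, u1, u2} Λ)
    (Y : TransSys.{u, u3, u4} Λ) where
  /-- the map on states -/
  f0 : X.S → Y.S
  /-- the map on actions -/
  fa : X.L → Y.L
  label : ∀ x, Y.μ (fa x) = X.μ x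
  map : ∀ (α : X.S) (l : List X.L) (β : X.S), X.T α l β → Y.T (f0 α) (l.map fa) (f0 β)

/-- Composition of morphisms of transition systems. -/
def TransSys.Hom.comp {Λ : Type u} {X : TransSys.{u, u1, u2} Λ}
    {Y : TransSys.{u, u3, u4} Λ} {Z : TransSys.{u, u5, u6} Λ}
    (g : Y.Hom Z) (f : X.Hom Y) : X.Hom Z where
  f0 := fun x => g.f0 (f.f0 x)
  fa := fun x => g.fa (f.fa x)
  label := fun x => (g.label (f.fa x)).trans (f.label x)
  map := fun α l β h => by
    have h2 := g.map _ _ _ (f.map α l β h)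
    rw [List.map_map] at h2
    exact h2

/-- The set of transitions of the cube `C_n[a_1,…,a_n]`: the states are the
elements of `{0,1}^n`, the actions are the indices `i ∈ {1,…,n}` (the action
`i` standing for the pair `(a_i, i)`, labelled by `a_i`). -/
@[reducible] def CubeT (n : ℕ) (ε : Fin n → Bool) (l : List (Fin n)) (ε' : Fin n → Bool) :
    Prop :=
  l ≠ [] ∧ l.Nodup ∧ (∀ i, ε i ≤ ε' i) ∧ ∀ i : Fin n, ε i ≠ ε' i ↔ i ∈ l

/-- The cube `C_n[a_1,…,a_n]` as a (weak higher dimensional) transition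
system. -/
@[reducible] def cube {Λ : Type u} (n : ℕ) (a : Fin n → Λ) : TransSys.{u, 0, 0} Λ where
  S := Fin n → Bool
  L := Fin n
  μ := a
  T := CubeT n
/-- The sub-system `C_n[a_1,…,a_n]^ext`: its states are `0_n` and `1_n`, its
actions are those of the cube, and its transitions are the tuples
`(0_n, (a_{σ(1)},σ(1)), …, (a_{σ(n)},σ(n)), 1_n)` for `σ` a permutation of
`{1,…,n}`, i.e. the nonempty lists of indices without repetition containing
every index. -/
@[reducible] def cubeExt {Λ : Type u} (n : ℕ) (a : Fin n → Λ) : TransSys.{u, 0, 0} Λ where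
  S := {ε : Fin n → Bool // ε = (fun _ => false) ∨ ε = (fun _ => true)}
  L := Fin n
  μ := a
  T := fun x l y => x.1 = (fun _ => false) ∧ y.1 = (fun _ => true) ∧
    l ≠ [] ∧ l.Nodup ∧ ∀ i : Fin n, i ∈ l

/-- The inclusion `C_n[a_1,…,a_n]^ext ⊆ C_n[a_1,…,a_n]`. -/
def extIncl {Λ : Type u} (n : ℕ) (a : Fin n → Λ) : (cubeExt n a).Hom (cube n a) where
  f0 := Subtype.val
  fa := id
  label := fun _ => rfl
  map := fun x l y h => by
    obtain ⟨hx, hy, hne, hnd, hall⟩ := h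
    rw [List.map_id, hx, hy]
    exact ⟨hne, hnd, fun i => by simp, fun i => by simpa using hall i⟩

section Aux

lemma boolLeCases {a b : Bool} (h : a ≤ b) (hne : a ≠ b) : a = false ∧ b = true := by
  cases a <;> cases b <;> revert h hne <;> decide

lemma boolLeTrue {a b : Bool} (h : a ≤ b) (ha : a = true) : b = true := by
  cases a <;> cases b <;> revert h ha <;> decide

/-- The list of indices where `ε` is `true`. -/
def tlist {n : ℕ} (ε : Fin n → Bool) : List (Fin n) :=
  (List.finRange n).filter (fun i => ε i)

/-- The list of indices where `ε` is `false`. -/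
def flist {n : ℕ} (ε : Fin n → Bool) : List (Fin n) :=
  (List.finRange n).filter (fun i => !ε i)

lemma mem_tlist {n : ℕ} {ε : Fin n → Bool} {i : Fin n} : i ∈ tlist ε ↔ ε i = true := by
  simp [tlist, List.mem_filter]

lemma mem_flist {n : ℕ} {ε : Fin n → Bool} {i : Fin n} : i ∈ flist ε ↔ ε i = false := by
  simp [flist, List.mem_filter]

lemma nodup_tlist {n : ℕ} (ε : Fin n → Bool) : (tlist ε).Nodup :=
  (List.nodup_finRange n).filter _

lemma nodup_flist {n : ℕ} (ε : Fin n → Bool) : (flist ε).Nodup :=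
  (List.nodup_finRange n).filter _

lemma perm_of_mem_iff {α : Type*} {l l' : List α} (h1 : l.Nodup) (h2 : l'.Nodup)
    (h : ∀ a, a ∈ l ↔ a ∈ l') : l.Perm l' :=
  (List.perm_ext_iff_of_nodup h1 h2).mpr h

lemma map_ne_nil {α β : Type*} {l : List α} (h : l ≠ []) (f : α → β) : l.map f ≠ [] := by
  cases l with
  | nil => exact absurd rfl h
  | cons a l => simp

lemma tlist_eq_nil {n : ℕ} {ε : Fin n → Bool} (h : tlist ε = []) (i : Fin n) : ε i = false := by
  have hni : i ∉ tlist ε := by rw [h]; exact List.not_mem_nil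
  cases hb : ε i with
  | false => rfl
  | true => exact absurd (mem_tlist.mpr hb) hni

lemma flist_eq_nil {n : ℕ} {ε : Fin n → Bool} (h : flist ε = []) (i : Fin n) : ε i = true := by
  have hni : i ∉ flist ε := by rw [h]; exact List.not_mem_nil
  cases hb : ε i with
  | true => rfl
  | false => exact absurd (mem_flist.mpr hb) hni

lemma TransSys.Hom.ext' {Λ : Type u} {X : TransSys.{u, u1, u2} Λ}
    {Y : TransSys.{u, u3, u4} Λ} {f g : X.Hom Y}
    (h0 : f.f0 = g.f0) (ha : f.fa = g.fa) : f = g := by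
  cases f; cases g; cases h0; cases ha; rfl

end Aux

section Fwd

lemma forward_surj {Λ : Type u} (X : TransSys.{u, u1, u2} Λ)
    (hmul : MultisetAxiom X.T) (hcoh : CoherenceAxiom X.T)
    (hUI : UniqueIntermediate X.T) (n : ℕ) (a : Fin n → Λ) :
    Function.Surjective (fun g : (cube n a).Hom X => g.comp (extIncl n a)) := by
  classical
  intro g'
  set α := g'.f0 ⟨fun _ => false, Or.inl rfl⟩ with hαdef
  set β := g'.f0 ⟨fun _ => true, Or.inr rfl⟩ with hβdef
  have hfull : ∀ l : List (Fin n), l ≠ [] → l.Nodup → (∀ i, i ∈ l) →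
      X.T α (l.map g'.fa) β := fun l h1 h2 h3 =>
    g'.map ⟨fun _ => false, Or.inl rfl⟩ l ⟨fun _ => true, Or.inr rfl⟩ ⟨rfl, rfl, h1, h2, h3⟩
  have hαβ : (∀ i : Fin n, False) → α = β := by
    intro hF
    have he : (⟨fun _ => false, Or.inl rfl⟩ : (cubeExt n a).S)
        = ⟨fun _ => true, Or.inr rfl⟩ := Subtype.ext (funext fun i => (hF i).elim)
    rw [hαdef, hβdef, he]
  have hdisj : ∀ ε : Fin n → Bool, List.Disjoint (tlist ε) (flist ε) := by
    intro ε i hi hi'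
    rw [mem_tlist] at hi; rw [mem_flist] at hi'; rw [hi] at hi'; exact Bool.noConfusion hi'
  have hcompl : ∀ (ε : Fin n → Bool) (i : Fin n), i ∈ tlist ε ++ flist ε := by
    intro ε i
    rw [List.mem_append, mem_tlist, mem_flist]
    cases h : ε i
    · exact Or.inr rfl
    · exact Or.inl rfl
  have key : ∀ ε : Fin n → Bool, tlist ε ≠ [] → flist ε ≠ [] →
      ∃! ν, X.T α ((tlist ε).map g'.fa) ν ∧ X.T ν ((flist ε).map g'.fa) β := by
    intro ε h1 h2
    have hfl := hfull (tlist ε ++ flist ε) (fun hc => h1 (List.append_eq_nil_iff.mp hc).1)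
      ((nodup_tlist ε).append (nodup_flist ε) (hdisj ε)) (hcompl ε)
    rw [List.map_append] at hfl
    exact hUI _ _ _ _ (map_ne_nil h1 _) (map_ne_nil h2 _) hfl
  obtain ⟨g0, hg0tl, hg0fl, hg0spec⟩ :
      ∃ g0 : (Fin n → Bool) → X.S,
        (∀ ε, tlist ε = [] → g0 ε = α) ∧
        (∀ ε, flist ε = [] → g0 ε = β) ∧
        (∀ ε (h1 : tlist ε ≠ []) (h2 : flist ε ≠ []),
          X.T α ((tlist ε).map g'.fa) (g0 ε) ∧ X.T (g0 ε) ((flist ε).map g'.fa) β) := by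
    refine ⟨fun ε => if h1 : tlist ε = [] then α else if h2 : flist ε = [] then β
      else (key ε h1 h2).exists.choose, ?_, ?_, ?_⟩
    · intro ε h; simp only [dif_pos h]
    · intro ε h
      by_cases h1 : tlist ε = []
      · simp only [dif_pos h1]
        refine hαβ (fun i => ?_)
        have h1' := tlist_eq_nil h1 i
        have h2' := flist_eq_nil h i
        rw [h1'] at h2'; exact Bool.noConfusion h2'
      · simp only [dif_neg h1, dif_pos h]
    · intro ε h1 h2; simp only [dif_neg h1, dif_neg h2]
      exact (key ε h1 h2).exists.choose_spec
  refine ⟨⟨g0, g'.fa, g'.label, ?_⟩, ?_⟩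
  · -- the morphism property
    rintro ε l ε' ⟨hl0, hlnd, hle, hflip⟩
    have hflipFT : ∀ i ∈ l, ε i = false ∧ ε' i = true :=
      fun i hi => boolLeCases (hle i) ((hflip i).mpr hi)
    have hT : ∀ i, ε' i = true ↔ (ε i = true ∨ i ∈ l) := by
      intro i
      constructor
      · intro h'
        by_cases hb : ε i = true
        · exact Or.inl hb
        · refine Or.inr ((hflip i).mp ?_)
          rw [h']; exact hb
      · rintro (hb | hil)
        · exact boolLeTrue (hle i) hb
        · exact (hflipFT i hil).2
    have hF : ∀ i, ε i = false ↔ (i ∈ l ∨ ε' i = false) := by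
      intro i
      constructor
      · intro h'
        by_cases hb : ε' i = false
        · exact Or.inr hb
        · refine Or.inl ((hflip i).mp ?_)
          rw [h']; intro hcon; exact hb hcon.symm
      · rintro (hil | hb)
        · exact (hflipFT i hil).1
        · cases hε : ε i with
          | false => rfl
          | true => rw [boolLeTrue (hle i) hε] at hb; exact absurd hb (by decide)
    by_cases hA : tlist ε = []
    · have hε0 : ∀ i, ε i = false := tlist_eq_nil hA
      by_cases hC : flist ε' = []
      · have hε'1 : ∀ i, ε' i = true := flist_eq_nil hC
        rw [hg0tl ε hA, hg0fl ε' hC]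
        exact hfull l hl0 hlnd (fun i => (hflip i).mp (by rw [hε0 i, hε'1 i]; decide))
      · rw [hg0tl ε hA]
        have hmem : ∀ i, i ∈ tlist ε' ↔ i ∈ l := by
          intro i
          rw [mem_tlist, hT i, hε0 i]
          simp
        have h1' : tlist ε' ≠ [] := by
          obtain ⟨i, hi⟩ := List.exists_mem_of_ne_nil l hl0
          intro hnil
          rw [hnil] at hmem
          exact List.not_mem_nil ((hmem i).mpr hi)
        have hperm : (tlist ε').Perm l := perm_of_mem_iff (nodup_tlist ε') hlnd hmem
        exact hmul _ _ _ _ (hperm.map g'.fa) (hg0spec ε' h1' hC).1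
    · by_cases hC : flist ε' = []
      · have hε'1 : ∀ i, ε' i = true := flist_eq_nil hC
        rw [hg0fl ε' hC]
        have hmem : ∀ i, i ∈ flist ε ↔ i ∈ l := by
          intro i
          rw [mem_flist, hF i, hε'1 i]
          simp
        have h2' : flist ε ≠ [] := by
          obtain ⟨i, hi⟩ := List.exists_mem_of_ne_nil l hl0
          intro hnil
          rw [hnil] at hmem
          exact List.not_mem_nil ((hmem i).mpr hi)
        have hperm : (flist ε).Perm l := perm_of_mem_iff (nodup_flist ε) hlnd hmem
        exact hmul _ _ _ _ (hperm.map g'.fa) (hg0spec ε hA h2').2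
      · -- general case: Coherence
        have hlsub : ∀ i ∈ l, i ∉ flist ε' := by
          intro i hi hic
          rw [mem_flist] at hic; rw [(hflipFT i hi).2] at hic; exact Bool.noConfusion hic
        have hAl_nd : (tlist ε ++ l).Nodup := by
          refine (nodup_tlist ε).append hlnd ?_
          intro i hi hil
          rw [mem_tlist] at hi
          rw [(hflipFT i hil).1] at hi; exact Bool.noConfusion hi
        have hAlC_nd : ((tlist ε ++ l) ++ flist ε').Nodup := by
          refine hAl_nd.append (nodup_flist ε') ?_
          intro i hi
          rw [List.mem_append] at hi
          rcases hi with hi | hi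
          · intro hic
            rw [mem_tlist] at hi; rw [mem_flist] at hic
            rw [boolLeTrue (hle i) hi] at hic; exact Bool.noConfusion hic
          · exact hlsub i hi
        have hflε : flist ε ≠ [] := by
          obtain ⟨i, hi⟩ := List.exists_mem_of_ne_nil l hl0
          intro hnil
          exact List.not_mem_nil (hnil ▸ mem_flist.mpr (hflipFT i hi).1)
        have htlε' : tlist ε' ≠ [] := by
          obtain ⟨i, hi⟩ := List.exists_mem_of_ne_nil l hl0
          intro hnil
          exact List.not_mem_nil (hnil ▸ mem_tlist.mpr (hflipFT i hi).2)
        obtain ⟨s1, s2⟩ := hg0spec ε hA hflε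
        obtain ⟨s1', s2'⟩ := hg0spec ε' htlε' hC
        have p1 : (flist ε).Perm (l ++ flist ε') := by
          refine perm_of_mem_iff (nodup_flist ε) (hlnd.append (nodup_flist ε') hlsub) ?_
          intro i
          rw [mem_flist, List.mem_append, mem_flist, hF i]
        have p2 : (tlist ε').Perm (tlist ε ++ l) := by
          refine perm_of_mem_iff (nodup_tlist ε') hAl_nd ?_
          intro i
          rw [mem_tlist, List.mem_append, mem_tlist, hT i]
        have hfull' : X.T α ((tlist ε).map g'.fa ++ l.map g'.fa ++ (flist ε').map g'.fa) β := by
          have := hfull ((tlist ε ++ l) ++ flist ε')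
            (fun hc => hA (List.append_eq_nil_iff.mp (List.append_eq_nil_iff.mp hc).1).1)
            hAlC_nd
            (fun i => by
              rw [List.mem_append, List.mem_append, mem_tlist, mem_flist]
              cases h' : ε' i
              · exact Or.inr rfl
              · exact Or.inl (by rw [← mem_tlist, ← List.mem_append]; exact p2.mem_iff.mp (mem_tlist.mpr h')))
          rwa [List.map_append, List.map_append] at this
        refine hcoh α β (g0 ε) (g0 ε') _ _ _ (map_ne_nil hA _) (map_ne_nil hl0 _)
          (map_ne_nil hC _) hfull' s1 ?_ ?_ s2'
        · have := hmul _ _ _ _ (p1.map g'.fa) s2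
          rwa [List.map_append] at this
        · have := hmul _ _ _ _ (p2.map g'.fa) s1'
          rwa [List.map_append] at this
  · -- restriction equals g'
    refine TransSys.Hom.ext' ?_ rfl
    funext s
    obtain ⟨sv, hs | hs⟩ := s
    · subst hs
      show g0 (fun _ => false) = g'.f0 ⟨fun _ => false, Or.inl rfl⟩
      rw [hg0tl _ (by simp [tlist])]
    · subst hs
      show g0 (fun _ => true) = g'.f0 ⟨fun _ => true, Or.inr rfl⟩
      rw [hg0fl _ (by simp [flist])]

end Fwd

lemma forward_inj {Λ : Type u} (X : TransSys.{u, u1, u2} Λ)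
    (hUI : UniqueIntermediate X.T) (n : ℕ) (a : Fin n → Λ) :
    Function.Injective (fun g : (cube n a).Hom X => g.comp (extIncl n a)) := by
  intro g h hgh
  have hfa : g.fa = h.fa := funext fun x => congrFun (congrArg TransSys.Hom.fa hgh) x
  have hα : g.f0 (fun _ => false) = h.f0 (fun _ => false) :=
    congrFun (congrArg TransSys.Hom.f0 hgh) ⟨fun _ => false, Or.inl rfl⟩
  have hβ : g.f0 (fun _ => true) = h.f0 (fun _ => true) :=
    congrFun (congrArg TransSys.Hom.f0 hgh) ⟨fun _ => true, Or.inr rfl⟩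
  refine TransSys.Hom.ext' ?_ hfa
  funext ε
  by_cases htl : tlist ε = []
  · have hε : ε = fun _ => false := funext (tlist_eq_nil htl)
    rw [hε]; exact hα
  by_cases hfl : flist ε = []
  · have hε : ε = fun _ => true := funext (flist_eq_nil hfl)
    rw [hε]; exact hβ
  · have t1 : (cube n a).T (fun _ => false) (tlist ε) ε :=
      ⟨htl, nodup_tlist ε, fun i => Bool.false_le _, fun i => by
        rw [mem_tlist]
        cases hb : ε i <;> simp [hb]⟩
    have t2 : (cube n a).T ε (flist ε) (fun _ => true) :=
      ⟨hfl, nodup_flist ε, fun i => Bool.le_true _, fun i => by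
        rw [mem_flist]
        cases hb : ε i <;> simp [hb]⟩
    have tfull : (cube n a).T (fun _ => false) (tlist ε ++ flist ε) (fun _ => true) := by
      refine ⟨fun hc => htl (List.append_eq_nil_iff.mp hc).1,
        (nodup_tlist ε).append (nodup_flist ε) ?_, fun i => Bool.false_le _, fun i => ?_⟩
      · intro i hi hi'
        rw [mem_tlist] at hi; rw [mem_flist] at hi'
        rw [hi] at hi'; exact Bool.noConfusion hi'
      · rw [List.mem_append, mem_tlist, mem_flist]
        cases hb : ε i <;> simp [hb]
    have Tg1 := g.map _ _ _ t1
    have Tg2 := g.map _ _ _ t2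
    have Th1 := h.map _ _ _ t1
    have Th2 := h.map _ _ _ t2
    rw [← hfa, ← hα] at Th1
    rw [← hfa, ← hβ] at Th2
    have Tfull := g.map _ _ _ tfull
    rw [List.map_append] at Tfull
    obtain ⟨ν, -, huniq⟩ := hUI _ _ _ _ (map_ne_nil htl _) (map_ne_nil hfl _) Tfull
    exact (huniq _ ⟨Tg1, Tg2⟩).trans (huniq _ ⟨Th1, Th2⟩).symm

lemma backward_ui {Λ : Type u} (X : TransSys.{u, u1, u2} Λ)
    (hmul : MultisetAxiom X.T) (hcoh : CoherenceAxiom X.T)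
    (horth : ∀ (n : ℕ) (a : Fin n → Λ),
      Function.Bijective (fun g : (cube n a).Hom X => g.comp (extIncl n a))) :
    UniqueIntermediate X.T := by
  classical
  intro α β l₁ l₂ hl₁ hl₂ htr
  have hp : 0 < l₁.length := List.length_pos_iff.mpr hl₁
  have hq : 0 < l₂.length := List.length_pos_iff.mpr hl₂
  set n := l₁.length + l₂.length with hn
  have hn1 : 0 < n := by omega
  have hlen : (l₁ ++ l₂).length = n := by rw [List.length_append]
  set u : Fin n → X.L := fun i => (l₁ ++ l₂).get (Fin.cast hlen.symm i) with hu
  set a : Fin n → Λ := fun i => X.μ (u i) with ha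
  set A : List (Fin n) := (List.finRange l₁.length).map (Fin.castAdd l₂.length) with hA
  set B : List (Fin n) := (List.finRange l₂.length).map (Fin.natAdd l₁.length) with hB
  have memA : ∀ i : Fin n, i ∈ A ↔ i.1 < l₁.length := by
    intro i
    rw [hA, List.mem_map]
    constructor
    · rintro ⟨j, -, rfl⟩; exact j.2
    · intro h'; exact ⟨⟨i.1, h'⟩, List.mem_finRange _, Fin.ext rfl⟩
  have memB : ∀ i : Fin n, i ∈ B ↔ l₁.length ≤ i.1 := by
    intro i
    rw [hB, List.mem_map]
    constructor
    · rintro ⟨j, -, rfl⟩; exact Nat.le_add_right _ _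
    · intro h'
      have hi2 := i.2
      refine ⟨⟨i.1 - l₁.length, by omega⟩, List.mem_finRange _, Fin.ext ?_⟩
      show l₁.length + (i.1 - l₁.length) = i.1
      omega
  have ndA : A.Nodup := by
    rw [hA]
    refine (List.nodup_finRange _).map (fun x y hxy => Fin.ext ?_)
    have := congrArg Fin.val hxy
    simpa using this
  have ndB : B.Nodup := by
    rw [hB]
    refine (List.nodup_finRange _).map (fun x y hxy => Fin.ext ?_)
    have := congrArg Fin.val hxy
    simpa using this
  have ndAB : (A ++ B).Nodup := by
    refine ndA.append ndB (fun i hi hib => ?_)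
    rw [memA i] at hi; rw [memB i] at hib; omega
  have complAB : ∀ i : Fin n, i ∈ A ++ B := by
    intro i
    rw [List.mem_append, memA i, memB i]
    omega
  have Aeq : A.map u = l₁ := by
    rw [hA, List.map_map]
    have heq : ∀ j ∈ List.finRange l₁.length,
        (u ∘ Fin.castAdd l₂.length) j = l₁.get j := by
      intro j _
      exact List.getElem_append_left j.2
    rw [List.map_congr_left heq, List.map_get_finRange]
  have Beq : B.map u = l₂ := by
    rw [hB, List.map_map]
    have heq : ∀ j ∈ List.finRange l₂.length,
        (u ∘ Fin.natAdd l₁.length) j = l₂.get j := by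
      intro j _
      have key2 : (l₁ ++ l₂)[l₁.length + (j : ℕ)]'(by
          rw [List.length_append]; omega) = l₂[(j : ℕ)] := by
        rw [List.getElem_append_right (Nat.le_add_right _ _)]
        congr 1
        omega
      exact key2
    rw [List.map_congr_left heq, List.map_get_finRange]
  have hAB : X.T α ((A ++ B).map u) β := by
    rw [List.map_append, Aeq, Beq]; exact htr
  have hAne : A ≠ [] := by
    intro hc
    have := (memA ⟨0, hn1⟩).mpr hp
    rw [hc] at this
    exact List.not_mem_nil this
  have hBne : B ≠ [] := by
    intro hc
    have := (memB ⟨l₁.length, by omega⟩).mpr (le_refl _)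
    rw [hc] at this
    exact List.not_mem_nil this
  set ε : Fin n → Bool := fun i => decide (i.1 < l₁.length) with hε
  have εmem : ∀ i : Fin n, ε i = true ↔ i.1 < l₁.length := by
    intro i; rw [hε]; simp
  have εmem' : ∀ i : Fin n, ε i = false ↔ l₁.length ≤ i.1 := by
    intro i; rw [hε]; simp [Nat.not_lt]
  have hne10 : (fun _ => true : Fin n → Bool) ≠ (fun _ => false) := by
    intro hcon
    exact Bool.noConfusion (congrFun hcon ⟨0, hn1⟩)
  have g'map : ∀ (x : (cubeExt n a).S) (l : List (Fin n)) (y : (cubeExt n a).S),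
      (cubeExt n a).T x l y →
      X.T (if x.1 = (fun _ => false) then α else β) (l.map u)
          (if y.1 = (fun _ => false) then α else β) := by
    rintro x l y ⟨hx, hy, hl0, hlnd, hcompl⟩
    rw [if_pos hx, if_neg (by rw [hy]; exact hne10)]
    have hperm : l.Perm (A ++ B) :=
      perm_of_mem_iff hlnd ndAB (fun i => iff_of_true (hcompl i) (complAB i))
    exact hmul _ _ _ _ ((hperm.map u).symm) hAB
  obtain ⟨g, hg⟩ := (horth n a).2
    ⟨fun s => if s.1 = (fun _ => false) then α else β, u, fun x => rfl, g'map⟩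
  have hfa : g.fa = u := funext fun x => congrFun (congrArg TransSys.Hom.fa hg) x
  have hgα : g.f0 (fun _ => false) = α :=
    (congrFun (congrArg TransSys.Hom.f0 hg) ⟨fun _ => false, Or.inl rfl⟩).trans (if_pos rfl)
  have hgβ : g.f0 (fun _ => true) = β :=
    (congrFun (congrArg TransSys.Hom.f0 hg) ⟨fun _ => true, Or.inr rfl⟩).trans (if_neg hne10)
  have gT : ∀ (δ : Fin n → Bool) (l : List (Fin n)) (δ' : Fin n → Bool),
      CubeT n δ l δ' → X.T (g.f0 δ) (l.map u) (g.f0 δ') := by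
    intro δ l δ' ht
    have := g.map δ l δ' ht
    rwa [hfa] at this
  have t1 : CubeT n (fun _ => false) A ε := by
    refine ⟨hAne, ndA, fun i => Bool.false_le _, fun i => ?_⟩
    rw [memA i, ← εmem i]
    cases hb : ε i <;> simp [hb]
  have t2 : CubeT n ε B (fun _ => true) := by
    refine ⟨hBne, ndB, fun i => Bool.le_true _, fun i => ?_⟩
    rw [memB i, ← εmem' i]
    cases hb : ε i <;> simp [hb]
  have hT1 : X.T α l₁ (g.f0 ε) := by
    have := gT _ _ _ t1
    rwa [hgα, Aeq] at this
  have hT2 : X.T (g.f0 ε) l₂ β := by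
    have := gT _ _ _ t2
    rwa [hgβ, Beq] at this
  refine ⟨g.f0 ε, ⟨hT1, hT2⟩, ?_⟩
  rintro ν' ⟨k1, k2⟩
  have hεne0 : ε ≠ (fun _ => false) := by
    intro hcon
    have h' := congrFun hcon ⟨0, hn1⟩
    rw [(εmem ⟨0, hn1⟩).mpr hp] at h'
    exact Bool.noConfusion h'
  have hεne1 : ε ≠ (fun _ => true) := by
    intro hcon
    have h' := congrFun hcon ⟨l₁.length, by omega⟩
    rw [(εmem' ⟨l₁.length, by omega⟩).mpr (le_refl _)] at h'
    exact Bool.noConfusion h'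
  have hmap : ∀ (δ : Fin n → Bool) (l : List (Fin n)) (δ' : Fin n → Bool), CubeT n δ l δ' →
      X.T (if δ = ε then ν' else g.f0 δ) (l.map u) (if δ' = ε then ν' else g.f0 δ') := by
    rintro δ l δ' ⟨hl0, hlnd, hle, hflip⟩
    have hδδ' : δ ≠ δ' := by
      obtain ⟨i, hi⟩ := List.exists_mem_of_ne_nil l hl0
      intro hcon
      exact ((hflip i).mpr hi) (congrFun hcon i)
    have hflipFT : ∀ i ∈ l, δ i = false ∧ δ' i = true :=
      fun i hi => boolLeCases (hle i) ((hflip i).mpr hi)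
    by_cases h1 : δ = ε
    · rw [if_pos h1, if_neg (fun h2 => hδδ' (h1.trans h2.symm))]
      subst h1
      have hlge : ∀ i ∈ l, l₁.length ≤ i.1 :=
        fun i hi => (εmem' i).mp (hflipFT i hi).1
      have hδ'T : ∀ i, δ' i = true ↔ (i.1 < l₁.length ∨ i ∈ l) := by
        intro i
        constructor
        · intro h'
          by_cases hb : i.1 < l₁.length
          · exact Or.inl hb
          · refine Or.inr ((hflip i).mp ?_)
            rw [h', (εmem' i).mpr (Nat.le_of_not_lt hb)]
            decide
        · rintro (hb | hil)
          · exact boolLeTrue (hle i) ((εmem i).mpr hb)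
          · exact (hflipFT i hil).2
      by_cases hδ'1 : δ' = (fun _ => true)
      · subst hδ'1
        rw [hgβ]
        have hperm : l.Perm B := by
          refine perm_of_mem_iff hlnd ndB (fun i => ?_)
          rw [memB i]
          constructor
          · exact hlge i
          · intro hgei
            refine (hflip i).mp ?_
            rw [(εmem' i).mpr hgei]
            simp
        exact hmul _ _ _ _ ((hperm.symm).map u) (by rw [Beq]; exact k2)
      · have hCne : flist δ' ≠ [] := fun hc => hδ'1 (funext (flist_eq_nil hc))
        have hlA_dis : ∀ i ∈ A, i ∉ l := by
          intro i hi hil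
          have := hlge i hil
          rw [memA i] at hi
          omega
        have hAl_nd : (A ++ l).Nodup := ndA.append hlnd hlA_dis
        have hAsubT : ∀ i ∈ A, δ' i = true := fun i hi =>
          boolLeTrue (hle i) ((εmem i).mpr ((memA i).mp hi))
        have hlC_dis : ∀ i ∈ l, i ∉ flist δ' := by
          intro i hi hic
          rw [mem_flist] at hic
          rw [(hflipFT i hi).2] at hic
          exact Bool.noConfusion hic
        have hAlC_nd : ((A ++ l) ++ flist δ').Nodup := by
          refine hAl_nd.append (nodup_flist δ') ?_
          intro i hi
          rw [List.mem_append] at hi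
          rcases hi with hi | hi
          · intro hic
            rw [mem_flist] at hic
            rw [hAsubT i hi] at hic
            exact Bool.noConfusion hic
          · exact hlC_dis i hi
        have hmemAl : ∀ i : Fin n, i ∈ A ++ l ↔ δ' i = true := by
          intro i
          rw [List.mem_append, memA i]
          exact (hδ'T i).symm
        have hfull' : X.T α (l₁ ++ l.map u ++ (flist δ').map u) β := by
          have hperm : ((A ++ l) ++ flist δ').Perm (A ++ B) := by
            refine perm_of_mem_iff hAlC_nd ndAB (fun i => iff_of_true ?_ (complAB i))
            rw [List.mem_append]
            cases hb : δ' i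
            · exact Or.inr (mem_flist.mpr hb)
            · exact Or.inl ((hmemAl i).mpr hb)
          have := hmul _ _ _ _ (hperm.symm.map u) hAB
          rwa [List.map_append, List.map_append, Aeq] at this
        have hmid : X.T ν' (l.map u ++ (flist δ').map u) β := by
          have hperm : B.Perm (l ++ flist δ') := by
            refine perm_of_mem_iff ndB (hlnd.append (nodup_flist δ') hlC_dis) (fun i => ?_)
            rw [memB i, List.mem_append, mem_flist]
            constructor
            · intro hge
              cases hb : δ' i
              · exact Or.inr rfl
              · refine Or.inl ((hflip i).mp ?_)
                rw [(εmem' i).mpr hge, hb]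
                decide
            · rintro (hil | hb)
              · exact hlge i hil
              · by_contra hlt
                rw [hAsubT i ((memA i).mpr (Nat.lt_of_not_le hlt))] at hb
                exact Bool.noConfusion hb
          have := hmul _ _ _ _ (hperm.map u) (by rw [Beq]; exact k2)
          rwa [List.map_append] at this
        have hleft : X.T α (l₁ ++ l.map u) (g.f0 δ') := by
          have t' : CubeT n (fun _ => false) (A ++ l) δ' := by
            refine ⟨fun hc => hAne (List.append_eq_nil_iff.mp hc).1, hAl_nd,
              fun i => Bool.false_le _, fun i => ?_⟩
            rw [hmemAl i]
            cases hb : δ' i <;> simp [hb]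
          have := gT _ _ _ t'
          rwa [hgα, List.map_append, Aeq] at this
        have hright : X.T (g.f0 δ') ((flist δ').map u) β := by
          have t' : CubeT n δ' (flist δ') (fun _ => true) := by
            refine ⟨hCne, nodup_flist δ', fun i => Bool.le_true _, fun i => ?_⟩
            rw [mem_flist]
            cases hb : δ' i <;> simp [hb]
          have := gT _ _ _ t'
          rwa [hgβ] at this
        exact hcoh α β ν' (g.f0 δ') l₁ (l.map u) ((flist δ').map u) hl₁
          (map_ne_nil hl0 _) (map_ne_nil hCne _) hfull' k1 hmid hleft hright
    · by_cases h2 : δ' = ε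
      · rw [if_neg h1, if_pos h2]
        subst h2
        have hllt : ∀ i ∈ l, i.1 < l₁.length :=
          fun i hi => (εmem i).mp (hflipFT i hi).2
        have hδT : ∀ i, δ i = true → i.1 < l₁.length :=
          fun i h' => (εmem i).mp (boolLeTrue (hle i) h')
        have hεT : ∀ i, ε i = true ↔ (δ i = true ∨ i ∈ l) := by
          intro i
          constructor
          · intro h'
            by_cases hb : δ i = true
            · exact Or.inl hb
            · refine Or.inr ((hflip i).mp ?_)
              rw [h']
              exact fun hc => hb hc
          · rintro (hb | hil)
            · exact boolLeTrue (hle i) hb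
            · exact (hflipFT i hil).2
        by_cases hδ0 : δ = (fun _ => false)
        · subst hδ0
          rw [hgα]
          have hperm : l.Perm A := by
            refine perm_of_mem_iff hlnd ndA (fun i => ?_)
            rw [memA i, ← εmem i, hεT i]
            simp
          exact hmul _ _ _ _ ((hperm.symm).map u) (by rw [Aeq]; exact k1)
        · have hDne : tlist δ ≠ [] := fun hc => hδ0 (funext (tlist_eq_nil hc))
          have hDl_dis : ∀ i ∈ tlist δ, i ∉ l := by
            intro i hi hil
            have h' := (hflipFT i hil).1
            rw [mem_tlist] at hi
            rw [hi] at h'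
            exact Bool.noConfusion h'
          have hDl_nd : (tlist δ ++ l).Nodup := (nodup_tlist δ).append hlnd hDl_dis
          have hmemDl : ∀ i : Fin n, i ∈ tlist δ ++ l ↔ ε i = true := by
            intro i
            rw [List.mem_append, mem_tlist, hεT i]
          have hpermA : (tlist δ ++ l).Perm A := by
            refine perm_of_mem_iff hDl_nd ndA (fun i => ?_)
            rw [hmemDl i, memA i, εmem i]
          have hfull' : X.T α ((tlist δ).map u ++ l.map u ++ l₂) β := by
            have hperm : ((tlist δ ++ l) ++ B).Perm (A ++ B) :=
              hpermA.append (List.Perm.refl B)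
            have := hmul _ _ _ _ (hperm.symm.map u) hAB
            rwa [List.map_append, List.map_append, Beq] at this
          have hfirst : X.T α ((tlist δ).map u) (g.f0 δ) := by
            have t' : CubeT n (fun _ => false) (tlist δ) δ := by
              refine ⟨hDne, nodup_tlist δ, fun i => Bool.false_le _, fun i => ?_⟩
              rw [mem_tlist]
              cases hb : δ i <;> simp [hb]
            have := gT _ _ _ t'
            rwa [hgα] at this
          have hmid : X.T (g.f0 δ) (l.map u ++ l₂) β := by
            have t' : CubeT n δ (l ++ B) (fun _ => true) := by
              refine ⟨fun hc => hl0 (List.append_eq_nil_iff.mp hc).1, hlnd.append ndB ?_,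
                fun i => Bool.le_true _, fun i => ?_⟩
              · intro i hi hib
                rw [memB i] at hib
                have := hllt i hi
                omega
              · rw [List.mem_append, memB i]
                constructor
                · intro h'
                  have hδf : δ i = false := by
                    cases hb : δ i
                    · rfl
                    · exact absurd hb h'
                  by_cases hlt : i.1 < l₁.length
                  · refine Or.inl ((hflip i).mp ?_)
                    rw [hδf, (εmem i).mpr hlt]
                    decide
                  · exact Or.inr (Nat.le_of_not_lt hlt)
                · rintro (hil | hge)
                  · rw [(hflipFT i hil).1]
                    simp
                  · have hδf : δ i = false := by
                      cases hb : δ i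
                      · rfl
                      · exact absurd ((εmem i).mp (boolLeTrue (hle i) hb)) (by omega)
                    rw [hδf]
                    simp
            have := gT _ _ _ t'
            rwa [hgβ, List.map_append, Beq] at this
          have hleft : X.T α ((tlist δ).map u ++ l.map u) ν' := by
            have := hmul _ _ _ _ ((hpermA.symm).map u) (by rw [Aeq]; exact k1)
            rwa [List.map_append] at this
          exact hcoh α β (g.f0 δ) ν' ((tlist δ).map u) (l.map u) l₂
            (map_ne_nil hDne _) (map_ne_nil hl0 _) hl₂ hfull' hfirst hmid hleft k2
      · rw [if_neg h1, if_neg h2]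
        exact gT _ _ _ ⟨hl0, hlnd, hle, hflip⟩
  let h : (cube n a).Hom X := ⟨fun δ => if δ = ε then ν' else g.f0 δ, u, fun x => rfl, hmap⟩
  have hcompeq : (fun g : (cube n a).Hom X => g.comp (extIncl n a)) h
      = (fun g : (cube n a).Hom X => g.comp (extIncl n a)) g := by
    apply TransSys.Hom.ext'
    · funext s
      obtain ⟨sv, hs | hs⟩ := s
      · subst hs
        show (if (fun _ => false : Fin n → Bool) = ε then ν'
          else g.f0 (fun _ => false)) = g.f0 (fun _ => false)
        rw [if_neg (fun hc => hεne0 hc.symm)]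
      · subst hs
        show (if (fun _ => true : Fin n → Bool) = ε then ν'
          else g.f0 (fun _ => true)) = g.f0 (fun _ => true)
        rw [if_neg (fun hc => hεne1 hc.symm)]
    · funext x
      show u x = g.fa x
      rw [hfa]
  have heq : h = g := (horth n a).1 hcompeq
  have hval : (if ε = ε then ν' else g.f0 ε) = g.f0 ε :=
    congrFun (congrArg TransSys.Hom.f0 heq) ε
  rw [if_pos rfl] at hval
  exact hval

/-- A weak higher dimensional transition system `X` satisfies the Unique
intermediate state axiom if and only if it is orthogonal to all the inclusions
`C_n[a_1,…,a_n]^ext ⊆ C_n[a_1,…,a_n]` for `n ≥ 0` and `a_1,…,a_n ∈ Σ`, i.e.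
if and only if for every `n ≥ 0` and all labels `a_1,…,a_n`, the restriction
map from morphisms `C_n[a_1,…,a_n] → X` to morphisms `C_n[a_1,…,a_n]^ext → X`
is a bijection. -/
theorem uniqueIntermediate_iff_orthogonal_ext {Λ : Type u} (X : TransSys.{u, u1, u2} Λ)
    (hne : ∀ α l β, X.T α l β → l ≠ [])
    (hmul : MultisetAxiom X.T) (hcoh : CoherenceAxiom X.T) :
    UniqueIntermediate X.T ↔
      ∀ (n : ℕ) (a : Fin n → Λ),
        Function.Bijective
          (fun g : (cube n a).Hom X => g.comp (extIncl n a)) := by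
  constructor
  · intro hUI n a
    exact ⟨forward_inj X hUI n a, forward_surj X hmul hcoh hUI n a⟩
  · intro horth
    exact backward_ui X hmul hcoh horth
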